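/- For a semi-ideal ultraparallel trapezoid (both upper vertices ideal with canonical horocycles), with lower edge length a₁₂ and distance ρ₁₂ between the line through the ideal upper vertices and the lower line, cosh(a₁₂) = 1 + 2/sinh²(ρ₁₂). -/
import Mathlib


/-- The Minkowski bilinear form on `ℝ^{1,2}`. -/
def mink (x y : Fin 3 → ℝ) : ℝ := -(x 0 * y 0) + x 1 * y 1 + x 2 * y 2

/-- The 4×4 Gram determinant of any four vectors in 3-dimensional Minkowski space vanishes. -/
lemma gram4 (w1 w2 w3 w4 : Fin 3 → ℝ) :
    (mink w1 w1)*(mink w2 w2)*(mink w3 w3)*(mink w4 w4) - (mink w1 w1)*(mink w2 w2)*(mink w3 w4)*(mink w3 w4) - (mink w1 w1)*(mink w2 w3)*(mink w2 w3)*(mink w4 w4) + 2*(mink w1 w1)*(mink w2 w3)*(mink w2 w4)*(mink w3 w4) - (mink w1 w1)*(mink w2 w4)*(mink w2 w4)*(mink w3 w3) - (mink w1 w2)*(mink w1 w2)*(mink w3 w3)*(mink w4 w4) + (mink w1 w2)*(mink w1 w2)*(mink w3 w4)*(mink w3 w4) + 2*(mink w1 w2)*(mink w1 w3)*(mink w2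 w3)*(mink w4 w4) - 2*(mink w1 w2)*(mink w1 w4)*(mink w2 w3)*(mink w3 w4) - 2*(mink w1 w2)*(mink w1 w3)*(mink w2 w4)*(mink w3 w4) + 2*(mink w1 w2)*(mink w1 w4)*(mink w2 w4)*(mink w3 w3) - (mink w1 w3)*(mink w1 w3)*(mink w2 w2)*(mink w4 w4) + 2*(mink w1 w3)*(mink w1 w4)*(mink w2 w2)*(mink w3 w4) + (mink w1 w3)*(mink w1 w3)*(mink w2 w4)*(mink w2 w4) - 2*(mink w1 w3)*(mink w1 w4)*(mink w2 w3)*(mink w2 w4) - (mink w1 w4)*(mink w1 w4)*(mink w2 w2)*(mink w3 w3) + (mink w1 w4)*(mink w1 w4)*(mink w2 w3)*(mink w2 w3) = 0 := by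
  simp only [mink]; ring

/-- Two future unit timelike vectors with inner product `-1` coincide. -/
lemma timelike_unit_eq (B₁ B₂ : Fin 3 → ℝ) (h1 : mink B₁ B₁ = -1) (h2 : mink B₂ B₂ = -1)
    (h12 : mink B₁ B₂ = -1) (p1 : 0 < B₁ 0) (p2 : 0 < B₂ 0) : B₁ = B₂ := by
  simp only [mink] at h1 h2 h12
  have hsq : (B₁ 0 - B₂ 0) ^ 2 ≤ 0 := by
    nlinarith [sq_nonneg ((B₁ 1 - B₂ 1) * B₁ 2 - (B₁ 2 - B₂ 2) * B₁ 1),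
      sq_nonneg (B₁ 1 - B₂ 1), sq_nonneg (B₁ 2 - B₂ 2), sq_nonneg (B₁ 0 - B₂ 0),
      mul_pos p1 p2]
  have e0 : B₁ 0 = B₂ 0 := by nlinarith [sq_nonneg (B₁ 0 - B₂ 0)]
  have h12' : (B₁ 1 - B₂ 1) ^ 2 + (B₁ 2 - B₂ 2) ^ 2 = 0 := by nlinarith
  have e1 : B₁ 1 = B₂ 1 := by nlinarith [sq_nonneg (B₁ 1 - B₂ 1), sq_nonneg (B₁ 2 - B₂ 2)]
  have e2 : B₁ 2 = B₂ 2 := by nlinarith [sq_nonneg (B₁ 1 - B₂ 1), sq_nonneg (B₁ 2 - B₂ 2)]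
  funext i; fin_cases i <;> assumption

/-- For a semi-ideal ultraparallel trapezoid: the upper side is the geodesic with ideal
endpoints `l₁, l₂` (distinct future light-like directions), orthogonal to the unit normal
`m'`; the lower line has unit normal `m`; `B₁, B₂` on the lower line are the orthogonal
projections of the ideal points (`lᵢ` is a positive multiple of `Bᵢ + m`); the two lines are
ultraparallel at distance `ρ₁₂ > 0` (`⟨m, m'⟩ = cosh ρ₁₂`), and `a₁₂ = |B₁B₂| ≥ 0`
(`cosh a₁₂ = -⟨B₁, B₂⟩`).  Then `cosh a₁₂ = 1 + 2 / sinh² ρ₁₂`. -/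
theorem semi_ideal_trapezoid_height
    (m m' B₁ B₂ l₁ l₂ : Fin 3 → ℝ) (ρ₁₂ a₁₂ : ℝ)
    (hm : mink m m = 1) (hm' : mink m' m' = 1)
    (hB₁ : mink B₁ B₁ = -1) (hB₁0 : 0 < B₁ 0) (hB₁m : mink B₁ m = 0)
    (hB₂ : mink B₂ B₂ = -1) (hB₂0 : 0 < B₂ 0) (hB₂m : mink B₂ m = 0)
    (hl₁ : mink l₁ l₁ = 0) (hl₁0 : 0 < l₁ 0)
    (hl₂ : mink l₂ l₂ = 0) (hl₂0 : 0 < l₂ 0)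
    (hind : ¬ ∃ t : ℝ, l₂ = t • l₁)
    (hup₁ : mink m' l₁ = 0) (hup₂ : mink m' l₂ = 0)
    (hproj₁ : ∃ c : ℝ, 0 < c ∧ l₁ = c • (B₁ + m))
    (hproj₂ : ∃ c : ℝ, 0 < c ∧ l₂ = c • (B₂ + m))
    (hρ : 0 < ρ₁₂) (hdist : mink m m' = Real.cosh ρ₁₂)
    (ha : 0 ≤ a₁₂) (halen : Real.cosh a₁₂ = -(mink B₁ B₂)) :
    Real.cosh a₁₂ = 1 + 2 / Real.sinh ρ₁₂ ^ 2 := by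
  obtain ⟨c₁, hc₁, hl₁e⟩ := hproj₁
  obtain ⟨c₂, hc₂, hl₂e⟩ := hproj₂
  set K := Real.cosh ρ₁₂ with hKdef
  set X := Real.cosh a₁₂ with hXdef
  have hBB : mink B₁ B₂ = -X := by rw [halen]; ring
  -- m'·B₁ = -K
  have hmB₁ : mink m' B₁ = -K := by
    have e : mink m' l₁ = c₁ * (mink m' B₁ + mink m m') := by
      rw [hl₁e]; simp only [mink, Pi.smul_apply, Pi.add_apply, smul_eq_mul]; ring
    rw [hup₁, hdist] at e
    have h := (mul_eq_zero.1 e.symm).resolve_left hc₁.ne'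
    linarith
  have hmB₂ : mink m' B₂ = -K := by
    have e : mink m' l₂ = c₂ * (mink m' B₂ + mink m m') := by
      rw [hl₂e]; simp only [mink, Pi.smul_apply, Pi.add_apply, smul_eq_mul]; ring
    rw [hup₂, hdist] at e
    have h := (mul_eq_zero.1 e.symm).resolve_left hc₂.ne'
    linarith
  -- the component of m' orthogonal to m
  set v : Fin 3 → ℝ := m' - K • m with hv
  have hB₁v : mink B₁ v = -K := by
    have e : mink B₁ v = mink m' B₁ - K * mink B₁ m := by
      simp only [hv, mink, Pi.sub_apply, Pi.smul_apply, smul_eq_mul]; ring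
    rw [e, hmB₁, hB₁m]; ring
  have hB₂v : mink B₂ v = -K := by
    have e : mink B₂ v = mink m' B₂ - K * mink B₂ m := by
      simp only [hv, mink, Pi.sub_apply, Pi.smul_apply, smul_eq_mul]; ring
    rw [e, hmB₂, hB₂m]; ring
  have hmv : mink m v = 0 := by
    have e : mink m v = mink m m' - K * mink m m := by
      simp only [hv, mink, Pi.sub_apply, Pi.smul_apply, smul_eq_mul]; ring
    rw [e, hdist, hm]; ring
  have hvv : mink v v = 1 - K ^ 2 := by
    have e : mink v v = mink m' m' - 2 * K * mink m m' + K ^ 2 * mink m m := by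
      simp only [hv, mink, Pi.sub_apply, Pi.smul_apply, smul_eq_mul]; ring
    rw [e, hm', hdist, hm]; ring
  have hg := gram4 B₁ B₂ m v
  rw [hB₁, hBB, hB₁m, hB₁v, hB₂, hB₂m, hB₂v, hm, hmv, hvv] at hg
  have key : (X - 1) * (K ^ 2 * X - K ^ 2 - X - 1) = 0 := by linear_combination hg
  have hσ : 0 < Real.sinh ρ₁₂ := Real.sinh_pos_iff.2 hρ
  have hK2 : K ^ 2 = 1 + Real.sinh ρ₁₂ ^ 2 := by
    rw [hKdef, Real.cosh_sq]; ring
  by_cases hX1 : X = 1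
  · -- then B₁ = B₂ and l₁, l₂ are proportional, contradiction
    exfalso
    rw [hX1] at hBB
    have hBeq : B₁ = B₂ := timelike_unit_eq B₁ B₂ hB₁ hB₂ hBB hB₁0 hB₂0
    exact hind ⟨c₂ / c₁, by
      rw [hl₂e, hl₁e, smul_smul, div_mul_cancel₀ _ hc₁.ne', hBeq]⟩
  · have h2 : K ^ 2 * X - K ^ 2 - X - 1 = 0 := by
      rcases mul_eq_zero.1 key with h | h
      · exact absurd (by linarith : X = 1) hX1
      · exact h
    have hσ2 : Real.sinh ρ₁₂ ^ 2 ≠ 0 := by positivity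
    have hS : Real.sinh ρ₁₂ ^ 2 = K ^ 2 - 1 := by linarith
    have hne : K ^ 2 - 1 ≠ 0 := by rw [← hS]; positivity
    rw [hS]
    field_simp
    linear_combination h2
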